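/- Let l, m₁, ρ, a be real numbers with l > 0, m₁ > 0, ρ > 0, a > 0, let 0 < b₁ < l, and let v ≥ 0. Then there exists λ with 0 < λ < π/l such that sin(λl)/λ − (m₁/ρ)·(a² + v²)·sin(λb₁)·sin(λ(l−b₁)) = 0; i.e., the first non-stationary eigenvalue of the cable with one load moving at steady speed v is strictly smaller than the first eigenvalue π/l of the continuous problem. -/

import Mathlib

open Real Set

/-- The first non-stationary eigenvalue of the cable with one load moving at
steady speed `v` is strictly smaller than the first eigenvalue `π/l` of the
continuous problem. -/
theorem moving_load_first_eigenvalue_lt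
    (l m₁ ρ a b₁ v : ℝ) (hl : 0 < l) (hm : 0 < m₁) (hρ : 0 < ρ) (ha : 0 < a)
    (hb₁ : 0 < b₁) (hb₁l : b₁ < l) (hv : 0 ≤ v) :
    ∃ lam : ℝ, 0 < lam ∧ lam < π / l ∧
      Real.sin (lam * l) / lam
        - (m₁ / ρ) * (a ^ 2 + v ^ 2) * Real.sin (lam * b₁) * Real.sin (lam * (l - b₁))
      = 0 := by
  set C : ℝ := (m₁ / ρ) * (a ^ 2 + v ^ 2) with hC
  have hCpos : 0 < C := by positivity
  set f : ℝ → ℝ := fun x => Real.sin (x * l)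
    - C * (x * Real.sin (x * b₁) * Real.sin (x * (l - b₁))) with hf
  have hπl : 0 < π / l := div_pos Real.pi_pos hl
  -- derivative of f at 0 is l
  have hd : HasDerivAt f l 0 := by
    have h1 : HasDerivAt (fun x : ℝ => Real.sin (x * l)) l 0 := by
      have := (Real.hasDerivAt_sin (0 * l)).comp 0 ((hasDerivAt_id 0).mul_const l)
      simpa [Function.comp_def] using this
    have hs1 : HasDerivAt (fun x : ℝ => Real.sin (x * b₁)) b₁ 0 := by
      have := (Real.hasDerivAt_sin (0 * b₁)).comp 0 ((hasDerivAt_id 0).mul_const b₁)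
      simpa [Function.comp_def] using this
    have hs2 : HasDerivAt (fun x : ℝ => Real.sin (x * (l - b₁))) (l - b₁) 0 := by
      have := (Real.hasDerivAt_sin (0 * (l - b₁))).comp 0
        ((hasDerivAt_id 0).mul_const (l - b₁))
      simpa [Function.comp_def] using this
    have hp : HasDerivAt (fun x : ℝ => x * Real.sin (x * b₁) * Real.sin (x * (l - b₁))) 0 0 := by
      have := ((hasDerivAt_id 0).mul hs1).mul hs2
      simpa [Pi.mul_def] using this
    have := h1.sub ((hp.const_mul C))
    simpa [Pi.sub_def] using this
  have hf0 : f 0 = 0 := by simp [hf]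
  -- slope tends to l
  have hslope : Filter.Tendsto (slope f 0) (nhdsWithin 0 {(0:ℝ)}ᶜ) (nhds l) :=
    hasDerivAt_iff_tendsto_slope.mp hd
  have hev : ∀ᶠ x in nhdsWithin 0 {(0:ℝ)}ᶜ, 0 < slope f 0 x :=
    hslope.eventually (eventually_gt_nhds hl)
  have hev' : ∀ᶠ x in nhdsWithin (0:ℝ) (Ioi 0), 0 < slope f 0 x :=
    hev.filter_mono (nhdsWithin_mono 0 (fun x hx => ne_of_gt hx))
  have hmem : Ioo (0:ℝ) (π / l) ∈ nhdsWithin (0:ℝ) (Ioi 0) :=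
    Ioo_mem_nhdsGT hπl
  obtain ⟨x₀, hx₀s, hx₀m⟩ := (hev'.and (Filter.eventually_of_mem hmem (fun x hx => hx))).exists
  obtain ⟨hx₀pos, hx₀lt⟩ := hx₀m
  have hfx₀ : 0 < f x₀ := by
    have hsl : slope f 0 x₀ = f x₀ / x₀ := by
      simp [slope, hf0, div_eq_inv_mul]
    rw [hsl] at hx₀s
    have := mul_pos hx₀s hx₀pos
    rwa [div_mul_cancel₀ _ (ne_of_gt hx₀pos)] at this
  -- value at π / l is negative
  have hfend : f (π / l) < 0 := by
    have h1 : Real.sin ((π / l) * l) = 0 := by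
      rw [div_mul_cancel₀ _ (ne_of_gt hl)]; exact Real.sin_pi
    have h2 : 0 < Real.sin ((π / l) * b₁) := by
      apply Real.sin_pos_of_pos_of_lt_pi
      · positivity
      · rw [div_mul_eq_mul_div, mul_comm]
        calc b₁ * π / l < l * π / l := by
              gcongr
          _ = π := by field_simp
    have h3 : 0 < Real.sin ((π / l) * (l - b₁)) := by
      apply Real.sin_pos_of_pos_of_lt_pi
      · have : 0 < l - b₁ := by linarith
        positivity
      · rw [div_mul_eq_mul_div, mul_comm]
        have hlb : l - b₁ < l := by linarith
        calc (l - b₁) * π / l < l * π / l := by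
              gcongr
          _ = π := by field_simp
    have : 0 < C * ((π / l) * Real.sin ((π / l) * b₁) * Real.sin ((π / l) * (l - b₁))) := by
      positivity
    simp only [hf, h1]
    linarith
  -- IVT
  have hcont : ContinuousOn f (Icc x₀ (π / l)) := by
    apply Continuous.continuousOn
    fun_prop
  have : (0:ℝ) ∈ Icc (f (π / l)) (f x₀) := ⟨le_of_lt hfend, le_of_lt hfx₀⟩
  obtain ⟨c, hcI, hfc⟩ := intermediate_value_Icc' (le_of_lt hx₀lt) hcont this
  refine ⟨c, lt_of_lt_of_le hx₀pos hcI.1, ?_, ?_⟩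
  · rcases lt_or_eq_of_le hcI.2 with h | h
    · exact h
    · exfalso; rw [h] at hfc; rw [hfc] at hfend; exact lt_irrefl 0 hfend
  · have hcne : c ≠ 0 := ne_of_gt (lt_of_lt_of_le hx₀pos hcI.1)
    have : Real.sin (c * l) = C * (c * Real.sin (c * b₁) * Real.sin (c * (l - b₁))) := by
      have := hfc
      simp only [hf] at this
      linarith
    rw [hC] at this
    rw [this, sub_eq_zero, div_eq_iff hcne]
    ring
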